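/- arXiv:1410.5062 — 2 statements merged into one kernel-verified Lean document; each statement's English description precedes it below -/
import Mathlib

section
/- Let G = (V,E) be a finite undirected graph, k ≥ 1, and let S_1,…,S_{k−1} be a (k−1)-packing in G with node set X = V_1 ∪ … ∪ V_{k−1}; set Y = V∖X. Then G has a k-packing if and only if there exist natural numbers p ∈ {3, 4, …, 3k − ⌈5(k−1)/2⌉} and q ∈ {⌈p/3⌉, …, p} and a k-packing in G that contains exactly p nodes from Y and has exactly q paths each of which contains at least one node from Y. -/
variable {V : Type*}

/-- The node set of a triple of vertices. -/
def tripleNodes [DecidableEq V] (p : V × V × V) : Finset V := {p.1, p.2.1, p.2.2}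

/-- `P` is a `t`-packing of the undirected graph `G`: `t` pairwise node-disjoint simple
paths, each on exactly `3` nodes (the `i`-th path visiting the three distinct nodes of the
triple `P i` in order). -/
def IsP2Packing [DecidableEq V] (G : SimpleGraph V) (t : ℕ) (P : Fin t → V × V × V) : Prop :=
  (∀ i, (tripleNodes (P i)).card = 3 ∧
    G.Adj (P i).1 (P i).2.1 ∧ G.Adj (P i).2.1 (P i).2.2) ∧
  ∀ i j, i ≠ j → Disjoint (tripleNodes (P i)) (tripleNodes (P j))

namespace Stmt13Aux
set_option linter.unusedSectionVars false
set_option linter.unusedVariables false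

open Finset

variable [DecidableEq V] [Fintype V]

lemma mem_tripleNodes {p : V × V × V} {a : V} :
    a ∈ tripleNodes p ↔ a = p.1 ∨ a = p.2.1 ∨ a = p.2.2 := by
  simp [tripleNodes]

lemma tripleNodes_mk (a b c : V) : tripleNodes (a, b, c) = {a, b, c} := rfl

lemma card_pair_le (x y : V) : ({x, y} : Finset V).card ≤ 2 := by
  have := Finset.card_insert_le x ({y} : Finset V); simpa using this

lemma card3_ne {a b c : V} (h : ({a, b, c} : Finset V).card = 3) :
    a ≠ b ∧ a ≠ c ∧ b ≠ c := by
  refine ⟨?_, ?_, ?_⟩ <;> rintro rfl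
  · have hs : ({a, a, c} : Finset V) ⊆ {a, c} := by intro t ht; simp at ht ⊢; tauto
    have := Finset.card_le_card hs; have := card_pair_le a c; omega
  · have hs : ({a, b, a} : Finset V) ⊆ {a, b} := by intro t ht; simp at ht ⊢; tauto
    have := Finset.card_le_card hs; have := card_pair_le a b; omega
  · have hs : ({a, b, b} : Finset V) ⊆ {a, b} := by intro t ht; simp at ht ⊢; tauto
    have := Finset.card_le_card hs; have := card_pair_le a b; omega

lemma card_inter3 {a b c : V} (hab : a ≠ b) (hac : a ≠ c) (hbc : b ≠ c) (S : Finset V) :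
    (({a, b, c} : Finset V) ∩ S).card =
      (if a ∈ S then 1 else 0) + (if b ∈ S then 1 else 0) + (if c ∈ S then 1 else 0) := by
  classical
  have h1 : ({a, b, c} : Finset V) ∩ S = ({a, b, c} : Finset V).filter (· ∈ S) := by
    rw [Finset.filter_mem_eq_inter]
  rw [h1, Finset.card_filter]
  rw [Finset.sum_insert (by simp [hab, hac]), Finset.sum_insert (by simp [hbc]),
    Finset.sum_singleton]
  ring

/-- The vertex set of a family of triples. -/
def nodes {t : ℕ} (Q : Fin t → V × V × V) : Finset V :=
  univ.biUnion fun i => tripleNodes (Q i)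

lemma mem_nodes {t : ℕ} {Q : Fin t → V × V × V} {a : V} :
    a ∈ nodes Q ↔ ∃ i, a ∈ tripleNodes (Q i) := by simp [nodes]

variable {G : SimpleGraph V} {k m : ℕ}

lemma pk_unique {Q : Fin k → V × V × V} (hQ : IsP2Packing G k Q) {a : V} {i j : Fin k}
    (hi : a ∈ tripleNodes (Q i)) (hj : a ∈ tripleNodes (Q j)) : i = j := by
  by_contra h
  exact Finset.disjoint_left.mp (hQ.2 i j h) hi hj

lemma nodes_card {Q : Fin k → V × V × V} (hQ : IsP2Packing G k Q) :
    (nodes Q).card = 3 * k := by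
  rw [nodes, card_biUnion (fun i _ j _ h => hQ.2 i j h)]
  simp [(fun i => (hQ.1 i).1 : ∀ i, (tripleNodes (Q i)).card = 3), Finset.sum_const,
    Finset.card_univ, mul_comm]

lemma inter_nodes_card {Q : Fin k → V × V × V} (hQ : IsP2Packing G k Q) (S : Finset V) :
    (nodes Q ∩ S).card = ∑ i, (tripleNodes (Q i) ∩ S).card := by
  have h : nodes Q ∩ S = univ.biUnion fun i => tripleNodes (Q i) ∩ S := by
    rw [nodes, Finset.biUnion_inter]
  rw [h, card_biUnion]
  intro i _ j _ h
  exact (hQ.2 i j h).mono inter_subset_left inter_subset_left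

lemma triple_subset_nodes {t : ℕ} {Q : Fin t → V × V × V} (i : Fin t) :
    tripleNodes (Q i) ⊆ nodes Q := fun a ha => mem_nodes.mpr ⟨i, ha⟩


noncomputable def xQ (P : Fin m → V × V × V) (Q : Fin k → V × V × V) : ℕ :=
  ∑ i, (tripleNodes (Q i) ∩ nodes P).card

open Classical in
noncomputable def nS (P : Fin m → V × V × V) (Q : Fin k → V × V × V) : ℕ :=
  ∑ i, if ∃ l, tripleNodes (Q i) = tripleNodes (P l) then 1 else 0

noncomputable def Phi (P : Fin m → V × V × V) (Q : Fin k → V × V × V) : ℕ :=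
  (2 * k + 1) * xQ P Q + nS P Q

def Opt (G : SimpleGraph V) (P : Fin m → V × V × V) (Q : Fin k → V × V × V) : Prop :=
  IsP2Packing G k Q ∧ ∀ Q' : Fin k → V × V × V, IsP2Packing G k Q' → Phi P Q' ≤ Phi P Q

lemma sum_update_f (f : V × V × V → ℕ) (Q : Fin k → V × V × V) (i0 : Fin k) (r : V × V × V) :
    (∑ i, f (Function.update Q i0 r i)) + f (Q i0) = (∑ i, f (Q i)) + f r := by
  have h1 : (fun i => f (Function.update Q i0 r i))
      = Function.update (fun i => f (Q i)) i0 (f r) := by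
    funext j
    by_cases h : j = i0
    · rw [h, Function.update_self, Function.update_self]
    · rw [Function.update_of_ne h, Function.update_of_ne h]
  rw [h1, Finset.sum_update_of_mem (Finset.mem_univ i0),
    Finset.sum_eq_sum_sdiff_singleton_add (Finset.mem_univ i0) (fun i => f (Q i))]
  ring

lemma xQ_update (P : Fin m → V × V × V) (Q : Fin k → V × V × V) (i0 : Fin k) (r : V × V × V) :
    xQ P (Function.update Q i0 r) + (tripleNodes (Q i0) ∩ nodes P).card
      = xQ P Q + (tripleNodes r ∩ nodes P).card := by
  unfold xQ
  exact sum_update_f (fun t => (tripleNodes t ∩ nodes P).card) Q i0 r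

open Classical in
lemma nS_update (P : Fin m → V × V × V) (Q : Fin k → V × V × V) (i0 : Fin k) (r : V × V × V) :
    nS P (Function.update Q i0 r)
      + (if ∃ l, tripleNodes (Q i0) = tripleNodes (P l) then 1 else 0)
      = nS P Q + (if ∃ l, tripleNodes r = tripleNodes (P l) then 1 else 0) := by
  unfold nS
  exact sum_update_f (fun t => if ∃ l, tripleNodes t = tripleNodes (P l) then 1 else 0) Q i0 r

lemma nS_le (P : Fin m → V × V × V) (Q : Fin k → V × V × V) : nS P Q ≤ k := by
  classical
  calc nS P Q ≤ ∑ _i : Fin k, 1 := Finset.sum_le_sum (by intro i _; split <;> omega)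
  _ = k := by simp

lemma Phi_lt_of_x {P : Fin m → V × V × V} {Q Q' : Fin k → V × V × V}
    (h : xQ P Q + 1 ≤ xQ P Q') : Phi P Q < Phi P Q' := by
  have h1 := nS_le P Q
  have h2 : (2 * k + 1) * (xQ P Q + 1) ≤ (2 * k + 1) * xQ P Q' := Nat.mul_le_mul_left _ h
  unfold Phi
  calc (2 * k + 1) * xQ P Q + nS P Q < (2 * k + 1) * xQ P Q + (2 * k + 1) := by omega
  _ = (2 * k + 1) * (xQ P Q + 1) := by ring
  _ ≤ (2 * k + 1) * xQ P Q' := h2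
  _ ≤ _ := Nat.le_add_right _ _

lemma Phi_lt_of_n {P : Fin m → V × V × V} {Q Q' : Fin k → V × V × V}
    (hx : xQ P Q ≤ xQ P Q') (hn : nS P Q < nS P Q') : Phi P Q < Phi P Q' :=
  add_lt_add_of_le_of_lt (Nat.mul_le_mul_left _ hx) hn

lemma packing_update {Q : Fin k → V × V × V} (hQ : IsP2Packing G k Q) {i0 : Fin k} {r : V × V × V}
    (h3 : (tripleNodes r).card = 3) (ha1 : G.Adj r.1 r.2.1) (ha2 : G.Adj r.2.1 r.2.2)
    (hd : ∀ j, j ≠ i0 → Disjoint (tripleNodes r) (tripleNodes (Q j))) :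
    IsP2Packing G k (Function.update Q i0 r) := by
  constructor
  · intro i
    by_cases h : i = i0
    · subst h; simp only [Function.update_self]; exact ⟨h3, ha1, ha2⟩
    · simp only [Function.update_of_ne h]; exact hQ.1 i
  · intro i j hij
    by_cases hi : i = i0 <;> by_cases hj : j = i0
    · exact absurd (hi.trans hj.symm) hij
    · subst hi; simp only [Function.update_self, Function.update_of_ne hj]; exact hd j hj
    · subst hj; simp only [Function.update_self, Function.update_of_ne hi]
      exact (hd i hi).symm
    · simp only [Function.update_of_ne hi, Function.update_of_ne hj]; exact hQ.2 i j hij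

lemma nodes_update {Q : Fin k → V × V × V} (hQ : IsP2Packing G k Q) {i0 : Fin k} {y n d z : V}
    (hT : tripleNodes (Q i0) = {y, n, d}) (hz : z ∉ nodes Q) :
    nodes (Function.update Q i0 (n, y, z)) = insert z ((nodes Q).erase d) := by
  have h3 : ({y, n, d} : Finset V).card = 3 := hT ▸ (hQ.1 i0).1
  obtain ⟨hyn, hyd, hnd⟩ := card3_ne h3
  ext a
  simp only [mem_nodes, Finset.mem_insert, Finset.mem_erase]
  constructor
  · rintro ⟨i, hi⟩
    by_cases h : i = i0
    · rw [h, Function.update_self, tripleNodes_mk] at hi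
      rcases Finset.mem_insert.mp hi with rfl | hi
      · right; refine ⟨hnd, ⟨i0, ?_⟩⟩; rw [hT]; simp
      rcases Finset.mem_insert.mp hi with rfl | hi
      · right; refine ⟨hyd, ⟨i0, ?_⟩⟩; rw [hT]; simp
      · left; exact Finset.mem_singleton.mp hi
    · rw [Function.update_of_ne h] at hi
      right
      refine ⟨?_, ⟨i, hi⟩⟩
      rintro rfl
      exact h (pk_unique hQ hi (by rw [hT]; simp))
  · rintro (rfl | ⟨had, i, hi⟩)
    · exact ⟨i0, by rw [Function.update_self, tripleNodes_mk]; simp⟩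
    · by_cases h : i = i0
      · rw [h] at hi
        refine ⟨i0, ?_⟩
        rw [Function.update_self, tripleNodes_mk]
        rw [hT] at hi
        simp at hi ⊢
        tauto
      · exact ⟨i, by rw [Function.update_of_ne h]; exact hi⟩

lemma inter_erase_eq (s t : Finset V) (d : V) : s ∩ t.erase d = (s ∩ t).erase d := by
  ext a; simp only [Finset.mem_inter, Finset.mem_erase]; tauto

lemma inter_insert_notMem {s : Finset V} {z : V} (h : z ∉ s) (t : Finset V) :
    s ∩ insert z t = s ∩ t := by
  ext a
  simp only [Finset.mem_inter, Finset.mem_insert]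
  constructor
  · rintro ⟨ha, rfl | hb⟩
    · exact absurd ha h
    · exact ⟨ha, hb⟩
  · tauto



lemma xQ_eq {P : Fin m → V × V × V} {Q : Fin k → V × V × V} (hQ : IsP2Packing G k Q) :
    xQ P Q = (nodes Q ∩ nodes P).card := (inter_nodes_card hQ _).symm

lemma xQ_le {P : Fin m → V × V × V} {Q : Fin k → V × V × V} (hP : IsP2Packing G m P)
    (hQ : IsP2Packing G k Q) : xQ P Q ≤ 3 * m := by
  rw [xQ_eq hQ]
  exact le_trans (Finset.card_le_card Finset.inter_subset_right) (le_of_eq (nodes_card hP))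

lemma site_le {Q : Fin k → V × V × V} (hQ : IsP2Packing G k Q) (i : Fin k) (S : Finset V) :
    (tripleNodes (Q i) ∩ S).card ≤ 3 :=
  le_trans (Finset.card_le_card Finset.inter_subset_left) (le_of_eq (hQ.1 i).1)

lemma D1 (hmk : m < k) {P : Fin m → V × V × V} (hP : IsP2Packing G m P)
    {Q : Fin k → V × V × V} (hopt : Opt G P Q) (l : Fin m) :
    2 ≤ (tripleNodes (P l) ∩ nodes Q).card := by
  by_contra hc
  push_neg at hc
  have hQ := hopt.1
  have hXl : (tripleNodes (P l) ∩ nodes P).card = 3 := by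
    rw [Finset.inter_eq_left.mpr (triple_subset_nodes (Q := P) l), (hP.1 l).1]
  rcases (by omega : (tripleNodes (P l) ∩ nodes Q).card = 0 ∨
      (tripleNodes (P l) ∩ nodes Q).card = 1) with h0 | h1
  · have hdisj : ∀ j : Fin k, Disjoint (tripleNodes (P l)) (tripleNodes (Q j)) := by
      intro j
      rw [Finset.disjoint_left]
      intro a ha haj
      have hmem : a ∈ tripleNodes (P l) ∩ nodes Q :=
        Finset.mem_inter.mpr ⟨ha, mem_nodes.mpr ⟨j, haj⟩⟩
      rw [Finset.card_eq_zero] at h0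
      rw [h0] at hmem
      exact absurd hmem (Finset.notMem_empty a)
    have hex : ∃ i : Fin k, (tripleNodes (Q i) ∩ nodes P).card ≤ 2 := by
      by_contra hno
      push_neg at hno
      have h1' : 3 * k ≤ xQ P Q := by
        calc 3 * k = ∑ _i : Fin k, 3 := by
              simp [Finset.sum_const, Finset.card_univ, mul_comm]
        _ ≤ ∑ i, (tripleNodes (Q i) ∩ nodes P).card := Finset.sum_le_sum (fun i _ => hno i)
        _ = xQ P Q := rfl
      have h2 := xQ_le hP hQ
      omega
    obtain ⟨i0, hi0⟩ := hex
    have hpk : IsP2Packing G k (Function.update Q i0 (P l)) :=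
      packing_update hQ (hP.1 l).1 (hP.1 l).2.1 (hP.1 l).2.2 (fun j _ => hdisj j)
    have hx := xQ_update P Q i0 (P l)
    rw [hXl] at hx
    have hlt : xQ P Q + 1 ≤ xQ P (Function.update Q i0 (P l)) := by omega
    exact absurd (hopt.2 _ hpk) (not_le.mpr (Phi_lt_of_x hlt))
  · obtain ⟨α, hα⟩ := Finset.card_eq_one.mp h1
    have hαmem : α ∈ tripleNodes (P l) ∩ nodes Q := by rw [hα]; exact Finset.mem_singleton_self α
    have hαl : α ∈ tripleNodes (P l) := (Finset.mem_inter.mp hαmem).1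
    obtain ⟨i0, hi0⟩ := mem_nodes.mp (Finset.mem_inter.mp hαmem).2
    have hd : ∀ j, j ≠ i0 → Disjoint (tripleNodes (P l)) (tripleNodes (Q j)) := by
      intro j hj
      rw [Finset.disjoint_left]
      intro a ha haj
      have hmem : a ∈ tripleNodes (P l) ∩ nodes Q :=
        Finset.mem_inter.mpr ⟨ha, mem_nodes.mpr ⟨j, haj⟩⟩
      rw [hα, Finset.mem_singleton] at hmem
      subst hmem
      exact hj (pk_unique hQ haj hi0)
    have hpk : IsP2Packing G k (Function.update Q i0 (P l)) :=
      packing_update hQ (hP.1 l).1 (hP.1 l).2.1 (hP.1 l).2.2 hd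
    have hx := xQ_update P Q i0 (P l)
    rw [hXl] at hx
    have hsite := site_le hQ i0 (nodes P)
    by_cases he : (tripleNodes (Q i0) ∩ nodes P).card ≤ 2
    · have hlt : xQ P Q + 1 ≤ xQ P (Function.update Q i0 (P l)) := by omega
      exact absurd (hopt.2 _ hpk) (not_le.mpr (Phi_lt_of_x hlt))
    · have hxeq : xQ P Q ≤ xQ P (Function.update Q i0 (P l)) := by omega
      have hn := nS_update P Q i0 (P l)
      have hold : ¬ ∃ r, tripleNodes (Q i0) = tripleNodes (P r) := by
        rintro ⟨r, hr⟩
        have hαr : α ∈ tripleNodes (P r) := hr ▸ hi0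
        have hrl : r = l := by
          by_contra hne
          exact Finset.disjoint_left.mp (hP.2 r l hne) hαr hαl
        rw [hrl] at hr
        have hsub : tripleNodes (P l) ⊆ nodes Q := hr ▸ triple_subset_nodes (Q := Q) i0
        rw [Finset.inter_eq_left.mpr hsub, (hP.1 l).1] at h1
        omega
      have hnew : ∃ r, tripleNodes (P l) = tripleNodes (P r) := ⟨l, rfl⟩
      rw [if_neg hold, if_pos hnew] at hn
      have hlt : nS P Q < nS P (Function.update Q i0 (P l)) := by omega
      exact absurd (hopt.2 _ hpk) (not_le.mpr (Phi_lt_of_n hxeq hlt))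



lemma card3_of_ne {a b c : V} (hab : a ≠ b) (hac : a ≠ c) (hbc : b ≠ c) :
    ({a, b, c} : Finset V).card = 3 := by
  rw [Finset.card_insert_of_notMem (by simp [hab, hac]),
    Finset.card_insert_of_notMem (by simp [hbc]), Finset.card_singleton]

lemma swap_nyz {Q : Fin k → V × V × V} (hQ : IsP2Packing G k Q) {i0 : Fin k} {y n d z : V}
    (hT : tripleNodes (Q i0) = {y, n, d}) (hny : G.Adj n y) (hyz : G.Adj y z)
    (hz2 : z ∉ nodes Q) :
    IsP2Packing G k (Function.update Q i0 (n, y, z)) := by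
  obtain ⟨hyn, hyd, hnd⟩ := card3_ne (hT ▸ (hQ.1 i0).1)
  have hyT : y ∈ tripleNodes (Q i0) := by rw [hT]; simp
  have hnT : n ∈ tripleNodes (Q i0) := by rw [hT]; simp
  have hnz : n ≠ z := fun h => hz2 (h ▸ triple_subset_nodes (Q := Q) i0 hnT)
  have hyz' : y ≠ z := fun h => hz2 (h ▸ triple_subset_nodes (Q := Q) i0 hyT)
  apply packing_update hQ _ hny hyz
  · intro j hj
    rw [Finset.disjoint_left]
    intro a ha haj
    rw [tripleNodes_mk] at ha
    simp only [Finset.mem_insert, Finset.mem_singleton] at ha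
    rcases ha with rfl | rfl | rfl
    · exact hj (pk_unique hQ haj hnT)
    · exact hj (pk_unique hQ haj hyT)
    · exact hz2 (mem_nodes.mpr ⟨j, haj⟩)
  · rw [tripleNodes_mk]
    exact card3_of_ne (Ne.symm hyn) hnz hyz'

lemma old_site_zero (hP : IsP2Packing G m P) {Q : Fin k → V × V × V} {i0 : Fin k} {l : Fin m}
    {y z : V} (hy : y ∈ tripleNodes (P l)) (hyT : y ∈ tripleNodes (Q i0))
    (hz1 : z ∈ tripleNodes (P l)) (hz2 : z ∉ nodes Q) :
    ¬ ∃ r, tripleNodes (Q i0) = tripleNodes (P r) := by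
  rintro ⟨r, hr⟩
  have hyr : y ∈ tripleNodes (P r) := by rw [← hr]; exact hyT
  have hrl : r = l := by
    by_contra hne; exact Finset.disjoint_left.mp (hP.2 r l hne) hyr hy
  rw [hrl] at hr
  exact hz2 (triple_subset_nodes (Q := Q) i0 (by rw [hr]; exact hz1))

lemma tie_move (hP : IsP2Packing G m P) {Q : Fin k → V × V × V} (hQ : IsP2Packing G k Q)
    {i0 : Fin k} {l : Fin m} {z y n d : V}
    (hz1 : z ∈ tripleNodes (P l)) (hz2 : z ∉ nodes Q)
    (hy : y ∈ tripleNodes (P l)) (hyz : G.Adj y z)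
    (hT : tripleNodes (Q i0) = {y, n, d}) (hny : G.Adj n y)
    (hdX : d ∈ nodes P) (hnl : n ∉ tripleNodes (P l)) :
    IsP2Packing G k (Function.update Q i0 (n, y, z)) ∧
      xQ P (Function.update Q i0 (n, y, z)) = xQ P Q ∧
      nS P (Function.update Q i0 (n, y, z)) = nS P Q ∧
      nodes (Function.update Q i0 (n, y, z)) = insert z ((nodes Q).erase d) := by
  obtain ⟨hyn, hyd, hnd⟩ := card3_ne (hT ▸ (hQ.1 i0).1)
  have hyT : y ∈ tripleNodes (Q i0) := by rw [hT]; simp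
  have hnT : n ∈ tripleNodes (Q i0) := by rw [hT]; simp
  have hnz : n ≠ z := fun h => hz2 (h ▸ triple_subset_nodes (Q := Q) i0 hnT)
  have hyz' : y ≠ z := fun h => hz2 (h ▸ triple_subset_nodes (Q := Q) i0 hyT)
  have yX : y ∈ nodes P := triple_subset_nodes (Q := P) l hy
  have zX : z ∈ nodes P := triple_subset_nodes (Q := P) l hz1
  refine ⟨swap_nyz hQ hT hny hyz hz2, ?_, ?_, nodes_update hQ hT hz2⟩
  · have hx := xQ_update P Q i0 (n, y, z)
    rw [hT, tripleNodes_mk, card_inter3 hyn hyd hnd,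
      card_inter3 (Ne.symm hyn) hnz hyz'] at hx
    by_cases hn : n ∈ nodes P <;> simp only [hn, yX, zX, hdX, if_pos, if_neg,
      if_true, if_false] at hx <;> omega
  · have hn := nS_update P Q i0 (n, y, z)
    rw [if_neg (old_site_zero hP hy hyT hz1 hz2)] at hn
    have hnew : ¬ ∃ r, tripleNodes ((n, y, z) : V × V × V) = tripleNodes (P r) := by
      rintro ⟨r, hr⟩
      rw [tripleNodes_mk] at hr
      have hyr : y ∈ tripleNodes (P r) := by rw [← hr]; simp
      have hrl : r = l := by
        by_contra hne; exact Finset.disjoint_left.mp (hP.2 r l hne) hyr hy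
      rw [hrl] at hr
      exact hnl (by rw [← hr]; simp)
    rw [if_neg hnew] at hn
    omega



set_option maxHeartbeats 1000000 in
lemma ML (hP : IsP2Packing G m P) {Q : Fin k → V × V × V}
    (hopt : Opt G P Q) {l : Fin m}
    (hc : (tripleNodes (P l) ∩ nodes Q).card = 2) :
    ∃ (i0 : Fin k) (z y n d : V),
      z ∈ tripleNodes (P l) ∧ z ∉ nodes Q ∧ y ∈ tripleNodes (P l) ∧ G.Adj y z ∧
      tripleNodes (Q i0) = {y, n, d} ∧ G.Adj n y ∧ (G.Adj n d ∨ G.Adj y d) ∧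
      d ∈ nodes P ∧ d ∉ tripleNodes (P l) ∧ n ∉ tripleNodes (P l) := by
  have hQ := hopt.1
  have hsd : (tripleNodes (P l) \ nodes Q).card = 1 := by
    have h := Finset.card_inter_add_card_sdiff (tripleNodes (P l)) (nodes Q)
    rw [hc, (hP.1 l).1] at h
    omega
  obtain ⟨z, hzset⟩ := Finset.card_eq_one.mp hsd
  have hzmem' : z ∈ tripleNodes (P l) \ nodes Q := by
    rw [hzset]; exact Finset.mem_singleton_self z
  have hz1 : z ∈ tripleNodes (P l) := (Finset.mem_sdiff.mp hzmem').1
  have hz2 : z ∉ nodes Q := (Finset.mem_sdiff.mp hzmem').2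
  have hcov : ∀ a, a ∈ tripleNodes (P l) → a ≠ z → a ∈ nodes Q := by
    intro a ha haz
    by_contra hno
    have hmem : a ∈ tripleNodes (P l) \ nodes Q := Finset.mem_sdiff.mpr ⟨ha, hno⟩
    rw [hzset, Finset.mem_singleton] at hmem
    exact haz hmem
  have hPl3 : ({(P l).1, (P l).2.1, (P l).2.2} : Finset V).card = 3 := (hP.1 l).1
  obtain ⟨huv, huw, hvw⟩ := card3_ne hPl3
  have hzmem : z = (P l).1 ∨ z = (P l).2.1 ∨ z = (P l).2.2 := mem_tripleNodes.mp hz1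
  have hyex : ∃ y, y ∈ tripleNodes (P l) ∧ y ≠ z ∧ G.Adj y z := by
    rcases hzmem with hz | hz | hz
    · exact ⟨(P l).2.1, by simp [mem_tripleNodes], by rw [hz]; exact Ne.symm huv,
        by rw [hz]; exact ((hP.1 l).2.1).symm⟩
    · exact ⟨(P l).1, by simp [mem_tripleNodes], by rw [hz]; exact huv,
        by rw [hz]; exact (hP.1 l).2.1⟩
    · exact ⟨(P l).2.1, by simp [mem_tripleNodes], by rw [hz]; exact hvw,
        by rw [hz]; exact (hP.1 l).2.2⟩
  obtain ⟨y, hyl, hyz', hyzadj⟩ := hyex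
  have hyQ : y ∈ nodes Q := hcov y hyl hyz'
  obtain ⟨i0, hyT⟩ := mem_nodes.mp hyQ
  have hT3 : ({(Q i0).1, (Q i0).2.1, (Q i0).2.2} : Finset V).card = 3 := (hQ.1 i0).1
  obtain ⟨hAB, hAC, hBC⟩ := card3_ne hT3
  have hymem : y = (Q i0).1 ∨ y = (Q i0).2.1 ∨ y = (Q i0).2.2 := mem_tripleNodes.mp hyT
  have hndex : ∃ n d, tripleNodes (Q i0) = {y, n, d} ∧ G.Adj n y ∧
      (G.Adj n d ∨ G.Adj y d) := by
    rcases hymem with hy1 | hy1 | hy1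
    · refine ⟨(Q i0).2.1, (Q i0).2.2, ?_, ?_, Or.inl (hQ.1 i0).2.2⟩
      · rw [hy1]; rfl
      · rw [hy1]; exact ((hQ.1 i0).2.1).symm
    · refine ⟨(Q i0).1, (Q i0).2.2, ?_, ?_, ?_⟩
      · rw [hy1, tripleNodes]; exact Finset.insert_comm _ _ _
      · rw [hy1]; exact (hQ.1 i0).2.1
      · right; rw [hy1]; exact (hQ.1 i0).2.2
    · refine ⟨(Q i0).2.1, (Q i0).1, ?_, ?_, ?_⟩
      · rw [hy1, tripleNodes]; ext a; simp only [Finset.mem_insert, Finset.mem_singleton]; tauto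
      · rw [hy1]; exact (hQ.1 i0).2.2
      · left; exact ((hQ.1 i0).2.1).symm
  obtain ⟨n, d, hT, hnyadj, hdor⟩ := hndex
  obtain ⟨hyn, hyd, hnd'⟩ := card3_ne (hT ▸ (hQ.1 i0).1)
  have hnT : n ∈ tripleNodes (Q i0) := by rw [hT]; simp
  have hdT : d ∈ tripleNodes (Q i0) := by rw [hT]; simp
  have hnz : n ≠ z := fun h => hz2 (h ▸ triple_subset_nodes (Q := Q) i0 hnT)
  have yX : y ∈ nodes P := triple_subset_nodes (Q := P) l hyl
  have zX : z ∈ nodes P := triple_subset_nodes (Q := P) l hz1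
  have hdX : d ∈ nodes P := by
    by_contra hdX
    have hpk := swap_nyz hQ hT hnyadj hyzadj hz2
    have hx := xQ_update P Q i0 (n, y, z)
    rw [hT, tripleNodes_mk, card_inter3 hyn hyd hnd',
      card_inter3 (Ne.symm hyn) hnz hyz'] at hx
    have hlt : xQ P Q + 1 ≤ xQ P (Function.update Q i0 (n, y, z)) := by
      by_cases hn : n ∈ nodes P <;> simp [hn, yX, zX, hdX] at hx <;> omega
    exact absurd (hopt.2 _ hpk) (not_le.mpr (Phi_lt_of_x hlt))
  have hdl : d ∉ tripleNodes (P l) := by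
    intro hdl
    have hdQX : d ∈ nodes Q := triple_subset_nodes (Q := Q) i0 hdT
    have hint : tripleNodes (P l) ∩ nodes Q = {y, d} := by
      refine (Finset.eq_of_subset_of_card_le ?_ ?_).symm
      · intro a ha
        simp only [Finset.mem_insert, Finset.mem_singleton] at ha
        rcases ha with rfl | rfl
        · exact Finset.mem_inter.mpr ⟨hyl, hyQ⟩
        · exact Finset.mem_inter.mpr ⟨hdl, hdQX⟩
      · rw [hc, Finset.card_insert_of_notMem (by simp [hyd]), Finset.card_singleton]
    have hdisj : ∀ j, j ≠ i0 → Disjoint (tripleNodes (P l)) (tripleNodes (Q j)) := by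
      intro j hj
      rw [Finset.disjoint_left]
      intro a ha haj
      have hmem : a ∈ tripleNodes (P l) ∩ nodes Q :=
        Finset.mem_inter.mpr ⟨ha, mem_nodes.mpr ⟨j, haj⟩⟩
      rw [hint] at hmem
      simp only [Finset.mem_insert, Finset.mem_singleton] at hmem
      rcases hmem with rfl | rfl
      · exact hj (pk_unique hQ haj hyT)
      · exact hj (pk_unique hQ haj hdT)
    have hpk := packing_update hQ (hP.1 l).1 (hP.1 l).2.1 (hP.1 l).2.2 hdisj
    have hx := xQ_update P Q i0 (P l)
    have hXl : (tripleNodes (P l) ∩ nodes P).card = 3 := by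
      rw [Finset.inter_eq_left.mpr (triple_subset_nodes (Q := P) l), (hP.1 l).1]
    rw [hXl, hT, card_inter3 hyn hyd hnd'] at hx
    have dX' : d ∈ nodes P := triple_subset_nodes (Q := P) l hdl
    by_cases hn : n ∈ nodes P
    · simp [hn, yX, dX'] at hx
      have hxle : xQ P Q ≤ xQ P (Function.update Q i0 (P l)) := by omega
      have hnn := nS_update P Q i0 (P l)
      rw [if_neg (old_site_zero hP hyl hyT hz1 hz2), if_pos ⟨l, rfl⟩] at hnn
      have hlt : nS P Q < nS P (Function.update Q i0 (P l)) := by omega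
      exact absurd (hopt.2 _ hpk) (not_le.mpr (Phi_lt_of_n hxle hlt))
    · simp [hn, yX, dX'] at hx
      have hlt : xQ P Q + 1 ≤ xQ P (Function.update Q i0 (P l)) := by omega
      exact absurd (hopt.2 _ hpk) (not_le.mpr (Phi_lt_of_x hlt))
  have hnl : n ∉ tripleNodes (P l) := by
    intro hnl
    have hNYZ : ({n, y, z} : Finset V) = tripleNodes (P l) := by
      apply Finset.eq_of_subset_of_card_le
      · intro a ha
        simp only [Finset.mem_insert, Finset.mem_singleton] at ha
        rcases ha with rfl | rfl | rfl
        · exact hnl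
        · exact hyl
        · exact hz1
      · rw [(hP.1 l).1, card3_of_ne (Ne.symm hyn) hnz hyz']
    have hpk := swap_nyz hQ hT hnyadj hyzadj hz2
    have hx := xQ_update P Q i0 (n, y, z)
    rw [hT, tripleNodes_mk, card_inter3 hyn hyd hnd',
      card_inter3 (Ne.symm hyn) hnz hyz'] at hx
    have hxle : xQ P Q ≤ xQ P (Function.update Q i0 (n, y, z)) := by
      by_cases hn : n ∈ nodes P <;> simp [hn, yX, zX, hdX] at hx <;> omega
    have hnn := nS_update P Q i0 (n, y, z)
    rw [if_neg (old_site_zero hP hyl hyT hz1 hz2),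
      if_pos ⟨l, by rw [tripleNodes_mk]; exact hNYZ⟩] at hnn
    have hlt : nS P Q < nS P (Function.update Q i0 (n, y, z)) := by omega
    exact absurd (hopt.2 _ hpk) (not_le.mpr (Phi_lt_of_n hxle hlt))
  exact ⟨i0, z, y, n, d, hz1, hz2, hyl, hyzadj, hT, hnyadj, hdor, hdX, hdl, hnl⟩



lemma Opt_of_eq {P : Fin m → V × V × V} {Q Q' : Fin k → V × V × V} (hopt : Opt G P Q)
    (hpk : IsP2Packing G k Q') (hx : xQ P Q' = xQ P Q) (hn : nS P Q' = nS P Q) :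
    Opt G P Q' := by
  refine ⟨hpk, fun Q'' h => ?_⟩
  have h1 := hopt.2 Q'' h
  unfold Phi at h1 ⊢
  rw [hx, hn]
  exact h1

lemma F3 (hmk : m < k) (hP : IsP2Packing G m P) {Q : Fin k → V × V × V} (hopt : Opt G P Q)
    {l l' : Fin m} {i0 : Fin k} {z y n d : V}
    (hz1 : z ∈ tripleNodes (P l)) (hz2 : z ∉ nodes Q)
    (hy : y ∈ tripleNodes (P l)) (hyz : G.Adj y z)
    (hT : tripleNodes (Q i0) = {y, n, d}) (hny : G.Adj n y)
    (hdX : d ∈ nodes P) (hdl : d ∉ tripleNodes (P l)) (hnl : n ∉ tripleNodes (P l))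
    (hd' : d ∈ tripleNodes (P l')) :
    (tripleNodes (P l') ∩ nodes Q).card = 3 := by
  have hQ := hopt.1
  obtain ⟨hpk, hxeq, hneq, hnodes⟩ := tie_move hP hQ hz1 hz2 hy hyz hT hny hdX hnl
  have hopt' : Opt G P (Function.update Q i0 (n, y, z)) := Opt_of_eq hopt hpk hxeq hneq
  have hll' : l' ≠ l := fun h => hdl (h ▸ hd')
  have hzl' : z ∉ tripleNodes (P l') := fun hzl' =>
    Finset.disjoint_left.mp (hP.2 l' l hll') hzl' hz1
  have hdQ : d ∈ nodes Q := triple_subset_nodes (Q := Q) i0 (by rw [hT]; simp)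
  have hstep : tripleNodes (P l') ∩ nodes (Function.update Q i0 (n, y, z))
      = (tripleNodes (P l') ∩ nodes Q).erase d := by
    rw [hnodes, inter_insert_notMem hzl', inter_erase_eq]
  have hdmem : d ∈ tripleNodes (P l') ∩ nodes Q := Finset.mem_inter.mpr ⟨hd', hdQ⟩
  have hcard : (tripleNodes (P l') ∩ nodes (Function.update Q i0 (n, y, z))).card
      = (tripleNodes (P l') ∩ nodes Q).card - 1 := by
    rw [hstep, Finset.card_erase_of_mem hdmem]
  have hD := D1 hmk hP hopt' l'
  have hD2 := D1 hmk hP hopt l'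
  have hle : (tripleNodes (P l') ∩ nodes Q).card ≤ 3 :=
    le_trans (Finset.card_le_card Finset.inter_subset_left) (le_of_eq (hP.1 l').1)
  omega

lemma same_core (hP : IsP2Packing G m P) {Q : Fin k → V × V × V} (hopt : Opt G P Q)
    {lm lo ls : Fin m} {i0 : Fin k} {zm ym zo yo d : V}
    (hlmlo : lm ≠ lo) (hlslm : ls ≠ lm) (hlslo : ls ≠ lo)
    (hzm1 : zm ∈ tripleNodes (P lm)) (hzm2 : zm ∉ nodes Q)
    (hym : ym ∈ tripleNodes (P lm)) (hymzm : G.Adj ym zm)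
    (hzo1 : zo ∈ tripleNodes (P lo)) (hzo2 : zo ∉ nodes Q)
    (hyo : yo ∈ tripleNodes (P lo))
    (hds : d ∈ tripleNodes (P ls))
    (hymT : ym ∈ tripleNodes (Q i0)) (hyoT : yo ∈ tripleNodes (Q i0))
    (hdT : d ∈ tripleNodes (Q i0))
    (hymd : G.Adj ym d)
    (hco : (tripleNodes (P lo) ∩ nodes Q).card = 2) : False := by
  have hQ := hopt.1
  have hmyo : ym ≠ yo := fun h =>
    Finset.disjoint_left.mp (hP.2 lm lo hlmlo) hym (h ▸ hyo)
  have hmd : ym ≠ d := fun h =>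
    Finset.disjoint_left.mp (hP.2 lm ls (Ne.symm hlslm)) hym (h ▸ hds)
  have hod : yo ≠ d := fun h =>
    Finset.disjoint_left.mp (hP.2 lo ls (Ne.symm hlslo)) hyo (h ▸ hds)
  have hTset : tripleNodes (Q i0) = {ym, yo, d} := by
    refine (Finset.eq_of_subset_of_card_le ?_ ?_).symm
    · intro a ha
      simp only [Finset.mem_insert, Finset.mem_singleton] at ha
      rcases ha with rfl | rfl | rfl
      · exact hymT
      · exact hyoT
      · exact hdT
    · rw [(hQ.1 i0).1, card3_of_ne hmyo hmd hod]
  -- the second covered vertex of lo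
  have hyoQ : yo ∈ nodes Q := mem_nodes.mpr ⟨i0, hyoT⟩
  have haoex : ∃ ao, ao ≠ yo ∧ tripleNodes (P lo) ∩ nodes Q = {yo, ao} := by
    rcases Finset.card_eq_two.mp hco with ⟨A2, B2, hAB2, hpair⟩
    have hyoint : yo ∈ tripleNodes (P lo) ∩ nodes Q := Finset.mem_inter.mpr ⟨hyo, hyoQ⟩
    rw [hpair] at hyoint
    simp only [Finset.mem_insert, Finset.mem_singleton] at hyoint
    rcases hyoint with h | h
    · refine ⟨B2, ?_, ?_⟩
      · rw [h]; exact Ne.symm hAB2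
      · rw [hpair, h]
    · refine ⟨A2, ?_, ?_⟩
      · rw [h]; exact hAB2
      · rw [hpair, h]; exact Finset.pair_comm A2 B2
  obtain ⟨ao, haoyo, hint⟩ := haoex
  have haoint : ao ∈ tripleNodes (P lo) ∩ nodes Q := by rw [hint]; simp
  have hao_lo : ao ∈ tripleNodes (P lo) := (Finset.mem_inter.mp haoint).1
  have haoQ : ao ∈ nodes Q := (Finset.mem_inter.mp haoint).2
  obtain ⟨ia, haoT⟩ := mem_nodes.mp haoQ
  have hao_notT : ao ∉ tripleNodes (Q i0) := by
    rw [hTset]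
    simp only [Finset.mem_insert, Finset.mem_singleton]
    push_neg
    refine ⟨?_, haoyo, ?_⟩
    · exact fun h => Finset.disjoint_left.mp (hP.2 lo lm (Ne.symm hlmlo)) hao_lo (h ▸ hym)
    · exact fun h => Finset.disjoint_left.mp (hP.2 lo ls (Ne.symm hlslo)) hao_lo (h ▸ hds)
  have hia : ia ≠ i0 := fun h => hao_notT (h ▸ haoT)
  -- first update
  have hzmym : zm ≠ ym := fun h => hzm2 (h ▸ mem_nodes.mpr ⟨i0, hymT⟩)
  have hzmd : zm ≠ d := fun h => hzm2 (h ▸ mem_nodes.mpr ⟨i0, hdT⟩)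
  have hpk1 : IsP2Packing G k (Function.update Q i0 (zm, ym, d)) := by
    apply packing_update hQ _ hymzm.symm hymd
    · intro j hj
      rw [Finset.disjoint_left]
      intro a ha haj
      rw [tripleNodes_mk] at ha
      simp only [Finset.mem_insert, Finset.mem_singleton] at ha
      rcases ha with rfl | rfl | rfl
      · exact hzm2 (mem_nodes.mpr ⟨j, haj⟩)
      · exact hj (pk_unique hQ haj hymT)
      · exact hj (pk_unique hQ haj hdT)
    · rw [tripleNodes_mk]
      exact card3_of_ne hzmym hzmd hmd
  set Q' := Function.update Q i0 (zm, ym, d) with hQ'def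
  have hQ'ia : tripleNodes (Q' ia) = tripleNodes (Q ia) := by
    rw [hQ'def, Function.update_of_ne hia]
  -- second update
  have hpk2 : IsP2Packing G k (Function.update Q' ia (P lo)) := by
    apply packing_update hpk1 (hP.1 lo).1 (hP.1 lo).2.1 (hP.1 lo).2.2
    intro j hj
    rw [Finset.disjoint_left]
    intro a ha haj
    by_cases hji0 : j = i0
    · rw [hji0] at haj
      have : tripleNodes (Q' i0) = {zm, ym, d} := by
        rw [hQ'def, Function.update_self, tripleNodes_mk]
      rw [this] at haj
      simp only [Finset.mem_insert, Finset.mem_singleton] at haj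
      rcases haj with rfl | rfl | rfl
      · exact Finset.disjoint_left.mp (hP.2 lo lm (Ne.symm hlmlo)) ha hzm1
      · exact Finset.disjoint_left.mp (hP.2 lo lm (Ne.symm hlmlo)) ha hym
      · exact Finset.disjoint_left.mp (hP.2 lo ls (Ne.symm hlslo)) ha hds
    · have : tripleNodes (Q' j) = tripleNodes (Q j) := by
        rw [hQ'def, Function.update_of_ne hji0]
      rw [this] at haj
      have hmem : a ∈ tripleNodes (P lo) ∩ nodes Q :=
        Finset.mem_inter.mpr ⟨ha, mem_nodes.mpr ⟨j, haj⟩⟩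
      rw [hint] at hmem
      simp only [Finset.mem_insert, Finset.mem_singleton] at hmem
      rcases hmem with rfl | rfl
      · exact hji0 (pk_unique hQ haj hyoT)
      · exact hj (pk_unique hQ haj haoT)
  -- Phi computations
  have ymX : ym ∈ nodes P := triple_subset_nodes (Q := P) lm hym
  have yoX : yo ∈ nodes P := triple_subset_nodes (Q := P) lo hyo
  have dX : d ∈ nodes P := triple_subset_nodes (Q := P) ls hds
  have zmX : zm ∈ nodes P := triple_subset_nodes (Q := P) lm hzm1
  have hx1 := xQ_update P Q i0 (zm, ym, d)
  rw [hTset, tripleNodes_mk, card_inter3 hmyo hmd hod, card_inter3 hzmym hzmd hmd] at hx1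
  simp only [ymX, yoX, dX, zmX, if_true, if_pos] at hx1
  rw [← hQ'def] at hx1
  have hxeq1 : xQ P Q' = xQ P Q := by omega
  have hx2 := xQ_update P Q' ia (P lo)
  have hXlo : (tripleNodes (P lo) ∩ nodes P).card = 3 := by
    rw [Finset.inter_eq_left.mpr (triple_subset_nodes (Q := P) lo), (hP.1 lo).1]
  rw [hXlo] at hx2
  have hsite2 := site_le hpk1 ia (nodes P)
  have hxle : xQ P Q ≤ xQ P (Function.update Q' ia (P lo)) := by omega
  -- nS computations
  have hn1 := nS_update P Q i0 (zm, ym, d)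
  have hold1 : ¬ ∃ r, tripleNodes (Q i0) = tripleNodes (P r) := by
    rintro ⟨r, hr⟩
    have h1 : ym ∈ tripleNodes (P r) := by rw [← hr]; exact hymT
    have h2 : r = lm := pk_unique hP h1 hym
    rw [h2] at hr
    have h3 : yo ∈ tripleNodes (P lm) := by rw [← hr]; exact hyoT
    exact Finset.disjoint_left.mp (hP.2 lo lm (Ne.symm hlmlo)) hyo h3
  have hnew1 : ¬ ∃ r, tripleNodes ((zm, ym, d) : V × V × V) = tripleNodes (P r) := by
    rintro ⟨r, hr⟩
    rw [tripleNodes_mk] at hr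
    have h1 : ym ∈ tripleNodes (P r) := by rw [← hr]; simp
    have h2 : r = lm := pk_unique hP h1 hym
    rw [h2] at hr
    have h3 : d ∈ tripleNodes (P lm) := by rw [← hr]; simp
    exact Finset.disjoint_left.mp (hP.2 ls lm hlslm) hds h3
  rw [if_neg hold1, if_neg hnew1] at hn1
  rw [← hQ'def] at hn1
  have hn2 := nS_update P Q' ia (P lo)
  have hold2 : ¬ ∃ r, tripleNodes (Q' ia) = tripleNodes (P r) := by
    rw [hQ'ia]
    rintro ⟨r, hr⟩
    have h1 : ao ∈ tripleNodes (P r) := by rw [← hr]; exact haoT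
    have h2 : r = lo := pk_unique hP h1 hao_lo
    rw [h2] at hr
    exact hzo2 (mem_nodes.mpr ⟨ia, by rw [hr]; exact hzo1⟩)
  rw [if_neg hold2, if_pos ⟨lo, rfl⟩] at hn2
  have hlt : nS P Q < nS P (Function.update Q' ia (P lo)) := by omega
  exact absurd (hopt.2 _ hpk2) (not_le.mpr (Phi_lt_of_n hxle hlt))



lemma F4 (hmk : m < k) (hP : IsP2Packing G m P) {Q : Fin k → V × V × V} (hopt : Opt G P Q)
    {l1 l2 ls : Fin m} (h12 : l1 ≠ l2)
    (hc1 : (tripleNodes (P l1) ∩ nodes Q).card = 2)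
    (hc2 : (tripleNodes (P l2) ∩ nodes Q).card = 2)
    (hcs : (tripleNodes (P ls) ∩ nodes Q).card = 3)
    {i1 i2 : Fin k} {z1 y1 n1 d1 z2 y2 n2 d2 : V}
    (hz11 : z1 ∈ tripleNodes (P l1)) (hz12 : z1 ∉ nodes Q)
    (hy1 : y1 ∈ tripleNodes (P l1)) (hyz1 : G.Adj y1 z1)
    (hT1 : tripleNodes (Q i1) = {y1, n1, d1}) (hny1 : G.Adj n1 y1)
    (hdor1 : G.Adj n1 d1 ∨ G.Adj y1 d1)
    (hd1X : d1 ∈ nodes P) (hd1l : d1 ∉ tripleNodes (P l1)) (hn1l : n1 ∉ tripleNodes (P l1))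
    (hz21 : z2 ∈ tripleNodes (P l2)) (hz22 : z2 ∉ nodes Q)
    (hy2 : y2 ∈ tripleNodes (P l2)) (hyz2 : G.Adj y2 z2)
    (hT2 : tripleNodes (Q i2) = {y2, n2, d2}) (hny2 : G.Adj n2 y2)
    (hd2X : d2 ∈ nodes P) (hd2l : d2 ∉ tripleNodes (P l2)) (hn2l : n2 ∉ tripleNodes (P l2))
    (hd1s : d1 ∈ tripleNodes (P ls)) (hd2s : d2 ∈ tripleNodes (P ls)) : False := by
  have hQ := hopt.1
  have hsl1 : ls ≠ l1 := fun h => by rw [h] at hcs; omega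
  have hsl2 : ls ≠ l2 := fun h => by rw [h] at hcs; omega
  have hd1T : d1 ∈ tripleNodes (Q i1) := by rw [hT1]; simp
  have hd2T : d2 ∈ tripleNodes (Q i2) := by rw [hT2]; simp
  have hy1T : y1 ∈ tripleNodes (Q i1) := by rw [hT1]; simp
  have hy2T : y2 ∈ tripleNodes (Q i2) := by rw [hT2]; simp
  by_cases hi : i1 = i2
  · -- same path of Q
    have hy2T1 : y2 ∈ tripleNodes (Q i1) := by rw [hi]; exact hy2T
    have hd2T1 : d2 ∈ tripleNodes (Q i1) := by rw [hi]; exact hd2T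
    have hy2mem : y2 ∈ ({y1, n1, d1} : Finset V) := by rw [← hT1]; exact hy2T1
    have hy2y1 : y2 ≠ y1 := fun h =>
      Finset.disjoint_left.mp (hP.2 l2 l1 (Ne.symm h12)) hy2 (h ▸ hy1)
    have hy2d1 : y2 ≠ d1 := fun h =>
      Finset.disjoint_left.mp (hP.2 l2 ls (Ne.symm hsl2)) hy2 (h ▸ hd1s)
    have hn1y2 : n1 = y2 := by
      simp only [Finset.mem_insert, Finset.mem_singleton] at hy2mem
      rcases hy2mem with h | h | h
      · exact absurd h hy2y1
      · exact h.symm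
      · exact absurd h hy2d1
    rcases hdor1 with h | h
    · rw [hn1y2] at h
      exact same_core hP hopt (Ne.symm h12) hsl2 hsl1 hz21 hz22 hy2 hyz2 hz11 hz12 hy1
        hd1s hy2T1 hy1T hd1T h hc1
    · exact same_core hP hopt h12 hsl1 hsl2 hz11 hz12 hy1 hyz1 hz21 hz22 hy2
        hd1s hy1T hy2T1 hd1T h hc2
  · -- different paths of Q
    obtain ⟨hpk1, hx1, hn1, hnodes1⟩ := tie_move hP hQ hz11 hz12 hy1 hyz1 hT1 hny1 hd1X hn1l
    have hopt1 := Opt_of_eq hopt hpk1 hx1 hn1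
    have hz2z1 : z2 ≠ z1 := fun h =>
      Finset.disjoint_left.mp (hP.2 l2 l1 (Ne.symm h12)) hz21 (h ▸ hz11)
    have hz22' : z2 ∉ nodes (Function.update Q i1 (n1, y1, z1)) := by
      rw [hnodes1]
      simp only [Finset.mem_insert, Finset.mem_erase]
      rintro (h | ⟨_, h⟩)
      · exact hz2z1 h
      · exact hz22 h
    have hi2i1 : i2 ≠ i1 := fun h => hi h.symm
    have hT2' : tripleNodes ((Function.update Q i1 (n1, y1, z1)) i2) = {y2, n2, d2} := by
      rw [Function.update_of_ne hi2i1]; exact hT2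
    obtain ⟨hpk2, hx2, hn2, hnodes2⟩ :=
      tie_move hP hpk1 hz21 hz22' hy2 hyz2 hT2' hny2 hd2X hn2l
    have hopt2 := Opt_of_eq hopt1 hpk2 hx2 hn2
    have hz1ls : z1 ∉ tripleNodes (P ls) := fun h =>
      Finset.disjoint_left.mp (hP.2 ls l1 hsl1) h hz11
    have hz2ls : z2 ∉ tripleNodes (P ls) := fun h =>
      Finset.disjoint_left.mp (hP.2 ls l2 hsl2) h hz21
    have hd1Q : d1 ∈ nodes Q := mem_nodes.mpr ⟨i1, hd1T⟩
    have hd2Q : d2 ∈ nodes Q := mem_nodes.mpr ⟨i2, hd2T⟩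
    have hd12 : d1 ≠ d2 := fun h => hi (pk_unique hQ hd1T (by rw [h]; exact hd2T))
    have hstep1 : tripleNodes (P ls) ∩ nodes (Function.update Q i1 (n1, y1, z1))
        = (tripleNodes (P ls) ∩ nodes Q).erase d1 := by
      rw [hnodes1, inter_insert_notMem hz1ls, inter_erase_eq]
    have hstep2 : tripleNodes (P ls) ∩
        nodes (Function.update (Function.update Q i1 (n1, y1, z1)) i2 (n2, y2, z2))
        = ((tripleNodes (P ls) ∩ nodes Q).erase d1).erase d2 := by
      rw [hnodes2, inter_insert_notMem hz2ls, inter_erase_eq, hstep1]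
    have h1m : d1 ∈ tripleNodes (P ls) ∩ nodes Q := Finset.mem_inter.mpr ⟨hd1s, hd1Q⟩
    have h2m : d2 ∈ (tripleNodes (P ls) ∩ nodes Q).erase d1 :=
      Finset.mem_erase.mpr ⟨Ne.symm hd12, Finset.mem_inter.mpr ⟨hd2s, hd2Q⟩⟩
    have hcard : (tripleNodes (P ls) ∩
        nodes (Function.update (Function.update Q i1 (n1, y1, z1)) i2 (n2, y2, z2))).card = 1 := by
      rw [hstep2, Finset.card_erase_of_mem h2m, Finset.card_erase_of_mem h1m, hcs]
    have hD := D1 hmk hP hopt2 ls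
    omega


lemma main_lemma (hmk : m < k) (hP : IsP2Packing G m P)
    (hex : ∃ Q : Fin k → V × V × V, IsP2Packing G k Q) :
    ∃ Q : Fin k → V × V × V, IsP2Packing G k Q ∧ 5 * m ≤ 2 * xQ P Q := by
  classical
  obtain ⟨Q0, hQ0⟩ := hex
  have hsne : ((Finset.univ : Finset (Fin k → V × V × V)).filter
      (fun Q : Fin k → V × V × V => IsP2Packing G k Q)).Nonempty :=
    ⟨Q0, by simp [hQ0]⟩
  obtain ⟨Q, hQmem, hQmax⟩ := Finset.exists_max_image _ (Phi P) hsne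
  have hQ : IsP2Packing G k Q := by
    simpa using hQmem
  have hopt : Opt G P Q := ⟨hQ, fun Q' h => hQmax Q' (by simp [h])⟩
  refine ⟨Q, hQ, ?_⟩
  have hcle : ∀ l : Fin m, (tripleNodes (P l) ∩ nodes Q).card ≤ 3 := fun l =>
    le_trans (Finset.card_le_card Finset.inter_subset_left) (le_of_eq (hP.1 l).1)
  have hD : ∀ l, 2 ≤ (tripleNodes (P l) ∩ nodes Q).card := D1 hmk hP hopt
  have hxsum : xQ P Q = ∑ l, (tripleNodes (P l) ∩ nodes Q).card := by
    rw [xQ_eq hQ, Finset.inter_comm]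
    exact inter_nodes_card hP (nodes Q)
  set Bs := Finset.univ.filter (fun l : Fin m => (tripleNodes (P l) ∩ nodes Q).card = 2)
    with hBsdef
  set Cs := Finset.univ.filter (fun l : Fin m => ¬ (tripleNodes (P l) ∩ nodes Q).card = 2)
    with hCsdef
  have H : ∀ l ∈ Bs, ∃ l',
      (l' ∈ Cs) ∧ ∃ (i0 : Fin k) (z y n d : V),
      z ∈ tripleNodes (P l) ∧ z ∉ nodes Q ∧ y ∈ tripleNodes (P l) ∧ G.Adj y z ∧
      tripleNodes (Q i0) = {y, n, d} ∧ G.Adj n y ∧ (G.Adj n d ∨ G.Adj y d) ∧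
      d ∈ nodes P ∧ d ∉ tripleNodes (P l) ∧ n ∉ tripleNodes (P l) ∧
      d ∈ tripleNodes (P l') := by
    intro l hl
    have hcl : (tripleNodes (P l) ∩ nodes Q).card = 2 := by
      simpa [hBsdef] using hl
    obtain ⟨i0, z, y, n, d, p1, p2, p3, p4, p5, p6, p7, p8, p9, p10⟩ := ML hP hopt hcl
    obtain ⟨l', hl'⟩ := mem_nodes.mp p8
    have hfull := F3 hmk hP hopt p1 p2 p3 p4 p5 p6 p8 p9 p10 hl'
    refine ⟨l', ?_, i0, z, y, n, d, p1, p2, p3, p4, p5, p6, p7, p8, p9, p10, hl'⟩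
    simp only [hCsdef, Finset.mem_filter, Finset.mem_univ, true_and]
    omega
  choose f hf using H
  set F : Fin m → Fin m := fun l => if h : l ∈ Bs then f l h else l with hFdef
  have hmaps : ∀ l ∈ Bs, F l ∈ Cs := by
    intro l hl
    simp only [hFdef, dif_pos hl]
    exact (hf l hl).1
  have hinj : Set.InjOn F ↑Bs := by
    intro l1 h1' l2 h2' heq
    have h1 : l1 ∈ Bs := h1'
    have h2 : l2 ∈ Bs := h2'
    by_contra hne
    rw [hFdef] at heq
    simp only [dif_pos h1, dif_pos h2] at heq
    have hc1 : (tripleNodes (P l1) ∩ nodes Q).card = 2 := by simpa [hBsdef] using h1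
    have hc2 : (tripleNodes (P l2) ∩ nodes Q).card = 2 := by simpa [hBsdef] using h2
    obtain ⟨hC1, i1, z1, y1, n1, d1, q1, q2, q3, q4, q5, q6, q7, q8, q9, q10, q11⟩ := hf l1 h1
    obtain ⟨hC2, i2, z2, y2, n2, d2, r1, r2, r3, r4, r5, r6, r7, r8, r9, r10, r11⟩ := hf l2 h2
    have hfull : (tripleNodes (P (f l1 h1)) ∩ nodes Q).card = 3 := by
      have hmem := hC1
      simp only [hCsdef, Finset.mem_filter, Finset.mem_univ, true_and] at hmem
      have := hD (f l1 h1)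
      have := hcle (f l1 h1)
      omega
    have r11' : d2 ∈ tripleNodes (P (f l1 h1)) := by rw [heq]; exact r11
    exact F4 hmk hP hopt hne hc1 hc2 hfull q1 q2 q3 q4 q5 q6 q7 q8 q9 q10
      r1 r2 r3 r4 r5 r6 r8 r9 r10 q11 r11'
  have hcard : Bs.card ≤ Cs.card := by
    have := Finset.card_le_card_of_injOn F hmaps hinj
    exact this
  have hsplit : Bs.card + Cs.card = m := by
    rw [hBsdef, hCsdef, Finset.card_filter_add_card_filter_not]
    simp
  have hsum2 : ∑ l, (tripleNodes (P l) ∩ nodes Q).card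
      = ∑ l ∈ Bs, (tripleNodes (P l) ∩ nodes Q).card
        + ∑ l ∈ Cs, (tripleNodes (P l) ∩ nodes Q).card := by
    rw [hBsdef, hCsdef]
    exact (Finset.sum_filter_add_sum_filter_not Finset.univ _ _).symm
  have hsumB : ∑ l ∈ Bs, (tripleNodes (P l) ∩ nodes Q).card = 2 * Bs.card := by
    rw [Finset.sum_congr rfl (fun l hl => (by simpa [hBsdef] using hl :
      (tripleNodes (P l) ∩ nodes Q).card = 2)), Finset.sum_const, smul_eq_mul, mul_comm]
  have hsumC : ∑ l ∈ Cs, (tripleNodes (P l) ∩ nodes Q).card = 3 * Cs.card := by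
    rw [Finset.sum_congr rfl (fun l hl => (by
      have hmem : ¬ (tripleNodes (P l) ∩ nodes Q).card = 2 := by simpa [hCsdef] using hl
      have := hD l
      have := hcle l
      omega : (tripleNodes (P l) ∩ nodes Q).card = 3)), Finset.sum_const, smul_eq_mul,
      mul_comm]
  omega


end Stmt13Aux

theorem stmt13 [DecidableEq V] [Fintype V] (G : SimpleGraph V) (k : ℕ) (hk : 1 ≤ k)
    (P : Fin (k - 1) → V × V × V) (hP : IsP2Packing G (k - 1) P) :
    (∃ Q : Fin k → V × V × V, IsP2Packing G k Q) ↔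
    (∃ p q : ℕ, 3 ≤ p ∧ p ≤ 3 * k - (5 * (k - 1) + 1) / 2 ∧
      (p + 2) / 3 ≤ q ∧ q ≤ p ∧
      ∃ Q : Fin k → V × V × V, IsP2Packing G k Q ∧
        ((Finset.univ.biUnion fun i => tripleNodes (Q i)) ∩
          (Finset.univ \ Finset.univ.biUnion fun i => tripleNodes (P i))).card = p ∧
        (Finset.univ.filter fun i : Fin k =>
          (tripleNodes (Q i) ∩
            (Finset.univ \ Finset.univ.biUnion fun j => tripleNodes (P j))).Nonempty).card
          = q) := by
  classical
  constructor
  · intro hex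
    obtain ⟨Q, hQ, hx⟩ := Stmt13Aux.main_lemma (m := k - 1) (k := k) (by omega) hP hex
    set Y : Finset V := Finset.univ \ Stmt13Aux.nodes P with hYdef
    have hpsum : (Stmt13Aux.nodes Q ∩ Y).card = ∑ i, (tripleNodes (Q i) ∩ Y).card :=
      Stmt13Aux.inter_nodes_card hQ Y
    have hNX : Stmt13Aux.nodes Q ∩ Y = Stmt13Aux.nodes Q \ Stmt13Aux.nodes P := by
      rw [hYdef]
      ext a
      simp only [Finset.mem_inter, Finset.mem_sdiff, Finset.mem_univ, true_and]
    have hsplitN : (Stmt13Aux.nodes Q ∩ Stmt13Aux.nodes P).card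
        + (Stmt13Aux.nodes Q ∩ Y).card = 3 * k := by
      rw [hNX, ← Stmt13Aux.nodes_card hQ]
      exact Finset.card_inter_add_card_sdiff _ _
    have hxq : Stmt13Aux.xQ P Q = (Stmt13Aux.nodes Q ∩ Stmt13Aux.nodes P).card :=
      Stmt13Aux.xQ_eq hQ
    have hxle := Stmt13Aux.xQ_le hP hQ
    have hpq1 : (Stmt13Aux.nodes Q ∩ Y).card
        = ∑ i ∈ Finset.univ.filter (fun i : Fin k => (tripleNodes (Q i) ∩ Y).Nonempty),
            (tripleNodes (Q i) ∩ Y).card := by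
      rw [hpsum,
        ← Finset.sum_filter_add_sum_filter_not Finset.univ
          (fun i : Fin k => (tripleNodes (Q i) ∩ Y).Nonempty)
          (fun i => (tripleNodes (Q i) ∩ Y).card)]
      have hzero : ∑ i ∈ Finset.univ.filter
          (fun i : Fin k => ¬ (tripleNodes (Q i) ∩ Y).Nonempty),
          (tripleNodes (Q i) ∩ Y).card = 0 := by
        apply Finset.sum_eq_zero
        intro i hi
        simp only [Finset.mem_filter, Finset.mem_univ, true_and,
          Finset.not_nonempty_iff_eq_empty] at hi
        rw [hi, Finset.card_empty]
      omega
    have hqlep : (Finset.univ.filter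
          (fun i : Fin k => (tripleNodes (Q i) ∩ Y).Nonempty)).card
        ≤ (Stmt13Aux.nodes Q ∩ Y).card := by
      rw [hpq1, Finset.card_eq_sum_ones]
      apply Finset.sum_le_sum
      intro i hi
      simp only [Finset.mem_filter, Finset.mem_univ, true_and] at hi
      exact Finset.Nonempty.card_pos hi
    have hple3q : (Stmt13Aux.nodes Q ∩ Y).card
        ≤ 3 * (Finset.univ.filter
          (fun i : Fin k => (tripleNodes (Q i) ∩ Y).Nonempty)).card := by
      rw [hpq1]
      calc ∑ i ∈ Finset.univ.filter (fun i : Fin k => (tripleNodes (Q i) ∩ Y).Nonempty),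
            (tripleNodes (Q i) ∩ Y).card
          ≤ ∑ _i ∈ Finset.univ.filter
              (fun i : Fin k => (tripleNodes (Q i) ∩ Y).Nonempty), 3 :=
            Finset.sum_le_sum (fun i _ => Stmt13Aux.site_le hQ i Y)
        _ = _ := by rw [Finset.sum_const, smul_eq_mul, mul_comm]
    refine ⟨(Stmt13Aux.nodes Q ∩ Y).card,
      (Finset.univ.filter (fun i : Fin k => (tripleNodes (Q i) ∩ Y).Nonempty)).card,
      ?_, ?_, ?_, ?_, Q, hQ, rfl, rfl⟩
    · omega
    · omega
    · omega
    · omega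
  · rintro ⟨p, q, _, _, _, _, Q, hQ, _, _⟩
    exact ⟨Q, hQ⟩
end

section
/- For any finite universe E, any family S of subsets of size p of E, and any parameter k ≥ p, there is a subfamily Ŝ ⊆ S of size at most C(k,p) (the binomial coefficient k choose p) that (k−p)-represents S; that is, for every X ∈ S and every Y ⊆ E∖X with |Y| ≤ k−p, there is X̂ ∈ Ŝ with X̂ ∩ Y = ∅. -/
open Finset

private def rk {n : ℕ} (T : Finset (Fin n)) (v : Fin n) : ℕ := (T.filter (fun u => u < v)).card

private lemma rk_lt {n : ℕ} {T : Finset (Fin n)} {v : Fin n} (hv : v ∈ T) : rk T v < T.card :=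
  Finset.card_lt_card (Finset.filter_ssubset.2 ⟨v, hv, by simp⟩)

private lemma rk_strictMono {n : ℕ} {T : Finset (Fin n)} {u v : Fin n} (hu : u ∈ T)
    (huv : u < v) : rk T u < rk T v := by
  apply Finset.card_lt_card
  constructor
  · intro w hw
    simp only [mem_filter] at hw ⊢
    exact ⟨hw.1, lt_trans hw.2 huv⟩
  · intro hsub
    have h1 : u ∈ T.filter (fun w => w < v) := Finset.mem_filter.2 ⟨hu, huv⟩
    have := hsub h1
    simp at this

private lemma rk_injOn {n : ℕ} {T : Finset (Fin n)} {u v : Fin n} (hu : u ∈ T) (hv : v ∈ T)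
    (h : rk T u = rk T v) : u = v := by
  rcases lt_trichotomy u v with h' | h' | h'
  · exact absurd h (rk_strictMono hu h').ne
  · exact h'
  · exact absurd h.symm (rk_strictMono hv h').ne

section Crux
set_option linter.unusedSectionVars false
variable {α : Type*} [DecidableEq α] [Fintype α] {n : ℕ}

variable (A B : Finset α)

/-- the value set of an embedding on `A ∪ B` -/
private def SS (σ : α ↪ Fin n) : Finset (Fin n) := (A ∪ B).image σ

private lemma SS_card (hd : Disjoint A B) (σ : α ↪ Fin n) :
    (SS A B σ).card = A.card + B.card := by
  rw [SS, Finset.card_image_of_injective _ σ.injective, Finset.card_union_of_disjoint hd]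

/-- index of `x ∈ A ∪ B` after sorting -/
private def idx (σ : α ↪ Fin n) (x : α) : ℕ :=
  if x ∈ A then rk (A.image σ) (σ x) else A.card + rk (B.image σ) (σ x)

private lemma idx_lt {σ : α ↪ Fin n} {x : α} (hx : x ∈ A ∪ B) :
    idx A B σ x < A.card + B.card := by
  rw [idx]
  split
  · next h =>
    calc rk (A.image σ) (σ x) < (A.image σ).card := rk_lt (mem_image_of_mem _ h)
    _ = A.card := Finset.card_image_of_injective _ σ.injective
    _ ≤ A.card + B.card := Nat.le_add_right _ _
  · next h =>
    have hb : x ∈ B := by rcases Finset.mem_union.1 hx with h' | h' <;> [exact absurd h' h; exact h']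
    have : rk (B.image σ) (σ x) < B.card := by
      calc rk (B.image σ) (σ x) < (B.image σ).card := rk_lt (mem_image_of_mem _ hb)
      _ = B.card := Finset.card_image_of_injective _ σ.injective
    omega

private lemma idx_injOn (hd : Disjoint A B) {σ : α ↪ Fin n} {x y : α} (hx : x ∈ A ∪ B)
    (hy : y ∈ A ∪ B) (h : idx A B σ x = idx A B σ y) : x = y := by
  have hAc : (A.image σ).card = A.card := Finset.card_image_of_injective _ σ.injective
  rw [idx, idx] at h
  by_cases hxA : x ∈ A <;> by_cases hyA : y ∈ A
  · rw [if_pos hxA, if_pos hyA] at h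
    exact σ.injective (rk_injOn (mem_image_of_mem _ hxA) (mem_image_of_mem _ hyA) h)
  · rw [if_pos hxA, if_neg hyA] at h
    have : rk (A.image σ) (σ x) < A.card := hAc ▸ rk_lt (mem_image_of_mem _ hxA)
    omega
  · rw [if_neg hxA, if_pos hyA] at h
    have : rk (A.image σ) (σ y) < A.card := hAc ▸ rk_lt (mem_image_of_mem _ hyA)
    omega
  · rw [if_neg hxA, if_neg hyA] at h
    have hxB : x ∈ B := by rcases Finset.mem_union.1 hx with h' | h' <;> [exact absurd h' hxA; exact h']
    have hyB : y ∈ B := by rcases Finset.mem_union.1 hy with h' | h' <;> [exact absurd h' hyA; exact h']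
    exact σ.injective (rk_injOn (mem_image_of_mem _ hxB) (mem_image_of_mem _ hyB) (by omega))

/-- the sorting map on embeddings -/
private def phiFun (hd : Disjoint A B) (σ : α ↪ Fin n) (x : α) : Fin n :=
  if h : x ∈ A ∪ B then
    (SS A B σ).orderEmbOfFin (SS_card A B hd σ) ⟨idx A B σ x, idx_lt A B h⟩
  else σ x

private lemma phiFun_inj (hd : Disjoint A B) (σ : α ↪ Fin n) :
    Function.Injective (phiFun A B hd σ) := by
  intro x y h
  rw [phiFun, phiFun] at h
  by_cases hx : x ∈ A ∪ B <;> by_cases hy : y ∈ A ∪ B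
  · rw [dif_pos hx, dif_pos hy] at h
    have := ((SS A B σ).orderEmbOfFin (SS_card A B hd σ)).injective h
    exact idx_injOn A B hd hx hy (by simpa [Fin.ext_iff] using this)
  · rw [dif_pos hx, dif_neg hy] at h
    exfalso
    have hmem : σ y ∈ SS A B σ := h ▸ Finset.orderEmbOfFin_mem _ _ _
    obtain ⟨z, hz, hzy⟩ := Finset.mem_image.1 hmem
    exact hy (σ.injective hzy ▸ hz)
  · rw [dif_neg hx, dif_pos hy] at h
    exfalso
    have hmem : σ x ∈ SS A B σ := h ▸ Finset.orderEmbOfFin_mem _ _ _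
    obtain ⟨z, hz, hzx⟩ := Finset.mem_image.1 hmem
    exact hx (σ.injective hzx ▸ hz)
  · rw [dif_neg hx, dif_neg hy] at h
    exact σ.injective h

private def phi (hd : Disjoint A B) (σ : α ↪ Fin n) : α ↪ Fin n :=
  ⟨phiFun A B hd σ, phiFun_inj A B hd σ⟩

private lemma phi_good (hd : Disjoint A B) (σ : α ↪ Fin n) {x y : α} (hx : x ∈ A) (hy : y ∈ B) :
    phi A B hd σ x < phi A B hd σ y := by
  have hx' : x ∈ A ∪ B := Finset.mem_union_left _ hx
  have hy' : y ∈ A ∪ B := Finset.mem_union_right _ hy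
  have hyA : y ∉ A := fun h => (Finset.disjoint_left.1 hd h) hy
  show phiFun A B hd σ x < phiFun A B hd σ y
  rw [phiFun, phiFun, dif_pos hx', dif_pos hy']
  apply ((SS A B σ).orderEmbOfFin (SS_card A B hd σ)).strictMono
  show idx A B σ x < idx A B σ y
  rw [idx, idx, if_pos hx, if_neg hyA]
  have : rk (A.image σ) (σ x) < A.card :=
    (Finset.card_image_of_injective _ σ.injective) ▸ rk_lt (mem_image_of_mem _ hx)
  omega

private lemma image_phi (hd : Disjoint A B) (σ : α ↪ Fin n) :
    (A ∪ B).image (phi A B hd σ) = SS A B σ := by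
  apply Finset.eq_of_subset_of_card_le
  · intro v hv
    obtain ⟨z, hz, hzv⟩ := Finset.mem_image.1 hv
    have : phi A B hd σ z = phiFun A B hd σ z := rfl
    rw [← hzv, this, phiFun, dif_pos hz]
    exact Finset.orderEmbOfFin_mem _ _ _
  · rw [SS_card A B hd σ, Finset.card_image_of_injective _ (phi A B hd σ).injective,
      Finset.card_union_of_disjoint hd]

private lemma orderEmbOfFin_congr {n c : ℕ} {s t : Finset (Fin n)} (hst : s = t)
    (h1 : s.card = c) (h2 : t.card = c) {i j : Fin c} (hij : i = j) :
    s.orderEmbOfFin h1 i = t.orderEmbOfFin h2 j := by subst hst; subst hij; rfl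

private lemma phi_fiber_inj (hd : Disjoint A B) {σ σ' : α ↪ Fin n}
    (h : phi A B hd σ = phi A B hd σ') (hT : A.image σ = A.image σ') : σ = σ' := by
  have hS : SS A B σ = SS A B σ' := by
    rw [← image_phi A B hd σ, ← image_phi A B hd σ', h]
  have hBimg : B.image σ = B.image σ' := by
    have key : ∀ τ : α ↪ Fin n, B.image τ ⊆ SS A B τ :=
      fun τ => Finset.image_subset_image Finset.subset_union_right
    have hdis : ∀ τ : α ↪ Fin n, A.image τ = A.image σ → Disjoint (A.image σ) (B.image τ) := by
      intro τ hτ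
      rw [← hτ]
      exact (Finset.disjoint_image τ.injective).2 hd
    have sub1 : B.image σ ⊆ SS A B σ \ A.image σ :=
      Finset.subset_sdiff.2 ⟨key σ, (hdis σ rfl).symm⟩
    have sub2 : B.image σ' ⊆ SS A B σ \ A.image σ := by
      rw [hS]
      exact Finset.subset_sdiff.2 ⟨key σ', (hdis σ' hT.symm).symm⟩
    have hsubA : A.image σ ⊆ SS A B σ :=
      Finset.image_subset_image Finset.subset_union_left
    have hc : (SS A B σ \ A.image σ).card = B.card := by
      rw [Finset.card_sdiff_of_subset hsubA, SS_card A B hd σ,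
        Finset.card_image_of_injective _ σ.injective]
      omega
    have e1 : B.image σ = SS A B σ \ A.image σ := Finset.eq_of_subset_of_card_le sub1
      (by rw [hc, Finset.card_image_of_injective _ σ.injective])
    have e2 : B.image σ' = SS A B σ \ A.image σ := Finset.eq_of_subset_of_card_le sub2
      (by rw [hc, Finset.card_image_of_injective _ σ'.injective])
    rw [e1, e2]
  apply Function.Embedding.ext
  intro x
  by_cases hx : x ∈ A ∪ B
  · have hfx : phiFun A B hd σ x = phiFun A B hd σ' x := congrArg (fun f : α ↪ Fin n => f x) h
    rw [phiFun, phiFun, dif_pos hx, dif_pos hx] at hfx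
    -- reduce to equality of indices
    have hidx : idx A B σ x = idx A B σ' x := by
      have hlt' : idx A B σ' x < (SS A B σ).card := by
        rw [SS_card A B hd σ]; exact idx_lt A B hx
      have h2 : ((SS A B σ).orderEmbOfFin (SS_card A B hd σ)) ⟨idx A B σ x, idx_lt A B hx⟩ =
          ((SS A B σ).orderEmbOfFin (SS_card A B hd σ)) ⟨idx A B σ' x, idx_lt A B hx⟩ :=
        hfx.trans (orderEmbOfFin_congr hS.symm (SS_card A B hd σ') (SS_card A B hd σ)
          (Fin.ext rfl))
      have := ((SS A B σ).orderEmbOfFin (SS_card A B hd σ)).injective h2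
      simpa [Fin.ext_iff] using this
    rw [idx, idx] at hidx
    by_cases hxA : x ∈ A
    · rw [if_pos hxA, if_pos hxA] at hidx
      rw [← hT] at hidx
      exact rk_injOn (mem_image_of_mem _ hxA) (hT ▸ mem_image_of_mem _ hxA) hidx
    · have hxB : x ∈ B := by rcases Finset.mem_union.1 hx with h' | h' <;> [exact absurd h' hxA; exact h']
      rw [if_neg hxA, if_neg hxA] at hidx
      have hidx' : rk (B.image σ) (σ x) = rk (B.image σ) (σ' x) := by
        rw [hBimg] at *; omega
      exact rk_injOn (mem_image_of_mem _ hxB) (hBimg ▸ mem_image_of_mem _ hxB) hidx'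
  · have hfx : phiFun A B hd σ x = phiFun A B hd σ' x := congrArg (fun f : α ↪ Fin n => f x) h
    rwa [phiFun, phiFun, dif_neg hx, dif_neg hx] at hfx

private lemma crux (hd : Disjoint A B) :
    Fintype.card (α ↪ Fin n) ≤ (A.card + B.card).choose A.card *
      (Finset.univ.filter fun σ : α ↪ Fin n => ∀ x ∈ A, ∀ y ∈ B, σ x < σ y).card := by
  classical
  have step1 : (Finset.univ : Finset (α ↪ Fin n)).card ≤ (A.card + B.card).choose A.card *
      ((Finset.univ : Finset (α ↪ Fin n)).image (phi A B hd)).card := by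
    apply Finset.card_le_mul_card_image
    intro τ hτ
    -- fiber injects into powersetCard A.card of (A ∪ B).image τ
    have : (Finset.univ.filter fun σ : α ↪ Fin n => phi A B hd σ = τ).card ≤
        (((A ∪ B).image τ).powersetCard A.card).card := by
      refine Finset.card_le_card_of_injOn (fun σ => A.image σ) ?_ ?_
      · intro σ hσ
        simp only [Finset.mem_coe, Finset.mem_filter] at hσ ⊢
        rw [Finset.mem_powersetCard]
        constructor
        · rw [← hσ.2, image_phi A B hd σ]
          exact Finset.image_subset_image Finset.subset_union_left
        · exact Finset.card_image_of_injective _ σ.injective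
      · intro σ hσ σ' hσ' hAeq
        simp only [Finset.mem_coe, Finset.mem_filter] at hσ hσ'
        exact phi_fiber_inj A B hd (hσ.2.trans hσ'.2.symm) hAeq
    calc (Finset.univ.filter fun σ : α ↪ Fin n => phi A B hd σ = τ).card
        ≤ (((A ∪ B).image τ).powersetCard A.card).card := this
      _ = ((A ∪ B).image τ).card.choose A.card := Finset.card_powersetCard _ _
      _ = (A.card + B.card).choose A.card := by
          rw [Finset.card_image_of_injective _ τ.injective, Finset.card_union_of_disjoint hd]
  have step2 : ((Finset.univ : Finset (α ↪ Fin n)).image (phi A B hd)).card ≤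
      (Finset.univ.filter fun σ : α ↪ Fin n => ∀ x ∈ A, ∀ y ∈ B, σ x < σ y).card := by
    apply Finset.card_le_card
    intro τ hτ
    obtain ⟨σ, _, hστ⟩ := Finset.mem_image.1 hτ
    rw [Finset.mem_filter]
    exact ⟨Finset.mem_univ _, fun x hx y hy => hστ ▸ phi_good A B hd σ hx hy⟩
  calc Fintype.card (α ↪ Fin n) = (Finset.univ : Finset (α ↪ Fin n)).card := rfl
    _ ≤ _ := step1
    _ ≤ _ := Nat.mul_le_mul_left _ step2

end Crux

private lemma bollobas {α ι : Type*} [DecidableEq α] [Fintype α] [DecidableEq ι]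
    (p k : ℕ) (I : Finset ι) (A B : ι → Finset α)
    (hA : ∀ i ∈ I, (A i).card = p) (hB : ∀ i ∈ I, (B i).card ≤ k - p) (hpk : p ≤ k)
    (hd : ∀ i ∈ I, Disjoint (A i) (B i))
    (hcross : ∀ i ∈ I, ∀ j ∈ I, i ≠ j → ∃ x, x ∈ A i ∧ x ∈ B j) :
    I.card ≤ k.choose p := by
  classical
  set n := Fintype.card α with hn
  set M := Fintype.card (α ↪ Fin n) with hMdef
  have hM : 0 < M := by
    have : Nonempty (α ↪ Fin n) := ⟨(Fintype.equivFin α).toEmbedding⟩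
    exact Fintype.card_pos
  set G : ι → Finset (α ↪ Fin n) := fun i =>
    Finset.univ.filter fun σ => ∀ x ∈ A i, ∀ y ∈ B i, σ x < σ y with hG
  have h1 : ∀ i ∈ I, M ≤ k.choose p * (G i).card := by
    intro i hi
    have hc := crux (n := n) (A i) (B i) (hd i hi)
    have hch : ((A i).card + (B i).card).choose (A i).card ≤ k.choose p := by
      rw [hA i hi]
      exact Nat.choose_le_choose p (by have := hB i hi; omega)
    exact hc.trans (Nat.mul_le_mul_right _ hch)
  have hdisj : ∀ i ∈ I, ∀ j ∈ I, i ≠ j → Disjoint (G i) (G j) := by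
    intro i hi j hj hij
    rw [Finset.disjoint_left]
    intro σ hσi hσj
    simp only [hG, Finset.mem_filter] at hσi hσj
    obtain ⟨x, hxA, hxB⟩ := hcross i hi j hj hij
    obtain ⟨y, hyA, hyB⟩ := hcross j hj i hi hij.symm
    exact absurd (hσi.2 x hxA y hyB) (not_lt.2 (le_of_lt (hσj.2 y hyA x hxB)))
  have h2 : ∑ i ∈ I, (G i).card ≤ M := by
    rw [← Finset.card_biUnion hdisj]
    exact (Finset.card_le_card (Finset.subset_univ _)).trans_eq Finset.card_univ
  have h3 : I.card * M ≤ k.choose p * M := by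
    calc I.card * M = ∑ _i ∈ I, M := by rw [Finset.sum_const, smul_eq_mul]
    _ ≤ ∑ i ∈ I, k.choose p * (G i).card := Finset.sum_le_sum h1
    _ = k.choose p * ∑ i ∈ I, (G i).card := by rw [Finset.mul_sum]
    _ ≤ k.choose p * M := Nat.mul_le_mul_left _ h2
  rw [mul_comm I.card M, mul_comm (k.choose p) M] at h3
  exact Nat.le_of_mul_le_mul_left h3 hM

theorem stmt14 {U : Type*} [DecidableEq U] (E : Finset U) (p k : ℕ) (hpk : p ≤ k)
    (𝒮 : Finset (Finset U)) (h𝒮 : ∀ S ∈ 𝒮, S ⊆ E ∧ S.card = p) :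
    ∃ 𝒮' ⊆ 𝒮, 𝒮'.card ≤ k.choose p ∧
      ∀ X ∈ 𝒮, ∀ Y ⊆ E \ X, Y.card ≤ k - p → ∃ X' ∈ 𝒮', X' ∩ Y = ∅ := by
  classical
  have hRep𝒮 : ∀ X ∈ 𝒮, ∀ Y ⊆ E \ X, Y.card ≤ k - p → ∃ X' ∈ 𝒮, X' ∩ Y = ∅ := by
    intro X hX Y hY _
    refine ⟨X, hX, ?_⟩
    rw [← Finset.disjoint_iff_inter_eq_empty]
    exact Finset.disjoint_left.2 fun a haX haY => (Finset.mem_sdiff.1 (hY haY)).2 haX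
  set Q : Set ℕ := {c | ∃ 𝒯, 𝒯 ⊆ 𝒮 ∧
    (∀ X ∈ 𝒮, ∀ Y ⊆ E \ X, Y.card ≤ k - p → ∃ X' ∈ 𝒯, X' ∩ Y = ∅) ∧ 𝒯.card = c} with hQdef
  have hQ : 𝒮.card ∈ Q := ⟨𝒮, Finset.Subset.refl _, hRep𝒮, rfl⟩
  obtain ⟨𝒯, h𝒯sub, h𝒯rep, h𝒯card⟩ := Nat.sInf_mem (Set.nonempty_of_mem hQ)
  refine ⟨𝒯, h𝒯sub, ?_, h𝒯rep⟩
  -- extract witnesses for minimality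
  have hwit : ∀ X' ∈ 𝒯, ∃ Y : Finset U, Y ⊆ E ∧ Y.card ≤ k - p ∧ X' ∩ Y = ∅ ∧
      ∀ Z ∈ 𝒯, Z ≠ X' → Z ∩ Y ≠ ∅ := by
    intro X' hX'
    by_contra hcon
    push_neg at hcon
    have hrep' : ∀ X ∈ 𝒮, ∀ Y ⊆ E \ X, Y.card ≤ k - p → ∃ Z ∈ 𝒯.erase X', Z ∩ Y = ∅ := by
      intro X hX Y hYsub hYc
      obtain ⟨Z, hZ, hZY⟩ := h𝒯rep X hX Y hYsub hYc
      by_cases hZX : Z = X'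
      · subst hZX
        have hYE : Y ⊆ E := hYsub.trans (Finset.sdiff_subset)
        obtain ⟨Z', hZ', hne, hz⟩ := hcon Y hYE hYc hZY
        exact ⟨Z', Finset.mem_erase.2 ⟨hne, hZ'⟩, hz⟩
      · exact ⟨Z, Finset.mem_erase.2 ⟨hZX, hZ⟩, hZY⟩
    have hmem : (𝒯.erase X').card ∈ Q :=
      ⟨_, (Finset.erase_subset _ _).trans h𝒯sub, hrep', rfl⟩
    have hle := Nat.sInf_le hmem
    rw [Finset.card_erase_of_mem hX'] at hle
    have hpos : 0 < 𝒯.card := Finset.card_pos.2 ⟨X', hX'⟩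
    omega
  choose! W hW1 hW2 hW3 hW4 using hwit
  -- apply the Bollobás-type bound with α = ↥E
  have key := bollobas (α := {x // x ∈ E}) (ι := Finset U) p k 𝒯
    (fun X' => X'.subtype (· ∈ E)) (fun X' => (W X').subtype (· ∈ E))
    (by
      intro i hi
      have hiE : i ⊆ E := (h𝒮 i (h𝒯sub hi)).1
      rw [Finset.card_subtype, Finset.filter_true_of_mem (fun x hx => hiE hx)]
      exact (h𝒮 i (h𝒯sub hi)).2)
    (by
      intro i hi
      rw [Finset.card_subtype, Finset.filter_true_of_mem (fun x hx => hW1 i hi hx)]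
      exact hW2 i hi)
    hpk
    (by
      intro i hi
      rw [Finset.disjoint_left]
      intro a ha hb
      rw [Finset.mem_subtype] at ha hb
      have : (a : U) ∈ i ∩ W i := Finset.mem_inter.2 ⟨ha, hb⟩
      rw [hW3 i hi] at this
      exact absurd this (Finset.notMem_empty _))
    (by
      intro i hi j hj hij
      have hne := hW4 j hj i hi hij
      obtain ⟨x, hx⟩ := Finset.nonempty_iff_ne_empty.2 hne
      rw [Finset.mem_inter] at hx
      have hxE : x ∈ E := (h𝒮 i (h𝒯sub hi)).1 hx.1
      exact ⟨⟨x, hxE⟩, Finset.mem_subtype.2 hx.1, Finset.mem_subtype.2 hx.2⟩)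
  exact key
end
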